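/- arXiv:2206.02774 — 6 statements merged into one kernel-verified Lean document; each statement's English description precedes it below -/
import Mathlib

section
/- Let f : [0,∞) → ℝ be convex with f(1) = 0, twice differentiable on an interval (r,R) ⊂ (0,∞), and suppose there exist constants a, A ∈ ℝ such that a ≤ t·f''(t) ≤ A for all t ∈ (r,R). Let μ and ν be probability measures on ℝ^d, absolutely continuous with respect to Lebesgue measure, whose density ratio μ(x)/ν(x) takes values in (r,R) for a.e. x. Then a·KL(μ|ν) ≤ I_f(μ|ν) ≤ A·KL(μ|ν), where I_f(μ|ν) = ∫ f(μ(x)/ν(x)) ν(x) dx and KL(μ|ν) = ∫ log(μ(x)/ν(x)) μ(x) dx. -/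
open MeasureTheory Set

/-- Tangent line inequality at 1 for a function with nonnegative second
derivative on `Ioo r R`. -/
lemma tangent_aux {g g' g'' : ℝ → ℝ} {r R : ℝ} (h1 : 1 ∈ Ioo r R)
    (hd : ∀ t ∈ Ioo r R, HasDerivAt g (g' t) t ∧ HasDerivAt g' (g'' t) t)
    (hnn : ∀ t ∈ Ioo r R, 0 ≤ g'' t) :
    ∀ s ∈ Ioo r R, g' 1 * (s - 1) ≤ g s - g 1 := by
  have hmono : MonotoneOn g' (Ioo r R) := by
    apply monotoneOn_of_deriv_nonneg (convex_Ioo r R)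
    · intro x hx; exact ((hd x hx).2).continuousAt.continuousWithinAt
    · rw [interior_Ioo]; intro x hx
      exact ((hd x hx).2).differentiableAt.differentiableWithinAt
    · rw [interior_Ioo]; intro x hx; rw [((hd x hx).2).deriv]; exact hnn x hx
  intro s hs
  rcases lt_trichotomy s 1 with h | h | h
  · have hsub : Icc s 1 ⊆ Ioo r R := fun x hx =>
      ⟨lt_of_lt_of_le hs.1 hx.1, lt_of_le_of_lt hx.2 h1.2⟩
    obtain ⟨c, hc, hceq⟩ := exists_hasDerivAt_eq_slope g g' h
      (fun x hx => ((hd x (hsub hx)).1).continuousAt.continuousWithinAt)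
      (fun x hx => (hd x (hsub (Ioo_subset_Icc_self hx))).1)
    have hcm : c ∈ Ioo r R := hsub (Ioo_subset_Icc_self hc)
    have hle : g' c ≤ g' 1 := hmono hcm h1 hc.2.le
    rw [hceq] at hle
    have h1s : (0:ℝ) < 1 - s := by linarith
    rw [div_le_iff₀ h1s] at hle
    nlinarith
  · simp [h]
  · have hsub : Icc 1 s ⊆ Ioo r R := fun x hx =>
      ⟨lt_of_lt_of_le h1.1 hx.1, lt_of_le_of_lt hx.2 hs.2⟩
    obtain ⟨c, hc, hceq⟩ := exists_hasDerivAt_eq_slope g g' h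
      (fun x hx => ((hd x (hsub hx)).1).continuousAt.continuousWithinAt)
      (fun x hx => (hd x (hsub (Ioo_subset_Icc_self hx))).1)
    have hcm : c ∈ Ioo r R := hsub (Ioo_subset_Icc_self hc)
    have hle : g' 1 ≤ g' c := hmono h1 hcm hc.1.le
    rw [hceq] at hle
    have h1s : (0:ℝ) < s - 1 := by linarith
    rw [le_div_iff₀ h1s] at hle
    nlinarith
  
/-- Jensen-type nonnegativity for a pointwise-convex integrand. -/
lemma aux_nonneg {d : ℕ} {g g' g'' : ℝ → ℝ} {r R : ℝ} (hr : 0 < r) (h1 : 1 ∈ Ioo r R)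
    (hd : ∀ t ∈ Ioo r R, HasDerivAt g (g' t) t ∧ HasDerivAt g' (g'' t) t)
    (hnn : ∀ t ∈ Ioo r R, 0 ≤ g'' t) (hg1 : g 1 = 0)
    {p q : (Fin d → ℝ) → ℝ} (hq0 : ∀ x, 0 ≤ q x)
    (hratio : ∀ᵐ x : (Fin d → ℝ), p x / q x ∈ Ioo r R)
    (hint : Integrable (fun x => g (p x / q x) * q x))
    (hpq : Integrable (fun x => p x - q x))
    (hpq0 : ∫ x, (p x - q x) = 0) :
    0 ≤ ∫ x, g (p x / q x) * q x := by
  have hqne : ∀ᵐ x : (Fin d → ℝ), q x ≠ 0 := by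
    filter_upwards [hratio] with x hx h0
    rw [h0, div_zero] at hx
    exact absurd hx.1 (by linarith)
  have key : (fun x => g' 1 * (p x - q x)) ≤ᵐ[volume]
      fun x => g (p x / q x) * q x := by
    filter_upwards [hratio, hqne] with x hx hqx
    have ht := tangent_aux h1 hd hnn _ hx
    rw [hg1, sub_zero] at ht
    have := mul_le_mul_of_nonneg_right ht (hq0 x)
    calc g' 1 * (p x - q x) = g' 1 * (p x / q x - 1) * q x := by
          field_simp
      _ ≤ g (p x / q x) * q x := this
  have := integral_mono_ae (hpq.const_mul (g' 1)) hint key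
  rwa [integral_const_mul, hpq0, mul_zero] at this

/-- f-divergence comparison with KL under bounds on t·f''(t). -/
theorem stmt_0 {d : ℕ} (f f' f'' : ℝ → ℝ) (r R a A : ℝ)
    (hr : 0 < r) (hrR : r < R)
    (hconv : ConvexOn ℝ (Ici (0:ℝ)) f) (hf1 : f 1 = 0)
    (hderiv : ∀ t ∈ Ioo r R, HasDerivAt f (f' t) t ∧ HasDerivAt f' (f'' t) t)
    (haA : ∀ t ∈ Ioo r R, a ≤ t * f'' t ∧ t * f'' t ≤ A)
    (p q : (Fin d → ℝ) → ℝ)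
    (hpm : Measurable p) (hqm : Measurable q)
    (hp0 : ∀ x, 0 ≤ p x) (hq0 : ∀ x, 0 ≤ q x)
    (hp1 : ∫ x, p x = 1) (hq1 : ∫ x, q x = 1)
    (hratio : ∀ᵐ x : (Fin d → ℝ), p x / q x ∈ Ioo r R)
    (hIf : Integrable (fun x => f (p x / q x) * q x))
    (hIkl : Integrable (fun x => Real.log (p x / q x) * p x)) :
    a * ∫ x, Real.log (p x / q x) * p x ≤ ∫ x, f (p x / q x) * q x ∧
      ∫ x, f (p x / q x) * q x ≤ A * ∫ x, Real.log (p x / q x) * p x := by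
  -- basic integrability
  have hpint : Integrable p := by
    by_contra h
    rw [integral_undef h] at hp1; norm_num at hp1
  have hqint : Integrable q := by
    by_contra h
    rw [integral_undef h] at hq1; norm_num at hq1
  have hpq : Integrable (fun x => p x - q x) := hpint.sub hqint
  have hpq0 : ∫ x, (p x - q x) = 0 := by
    rw [integral_sub hpint hqint, hp1, hq1]; ring
  have hvol : (volume : Measure (Fin d → ℝ)) ≠ 0 := by
    intro h
    rw [h, integral_zero_measure] at hq1; norm_num at hq1
  have hqne : ∀ᵐ x : (Fin d → ℝ), q x ≠ 0 := by
    filter_upwards [hratio] with x hx h0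
    rw [h0, div_zero] at hx
    exact absurd hx.1 (by linarith)
  have hqpos : ∀ᵐ x : (Fin d → ℝ), 0 < q x := by
    filter_upwards [hqne] with x hx
    exact (hq0 x).lt_of_ne (Ne.symm hx)
  -- 1 ∈ Ioo r R
  have h1 : (1:ℝ) ∈ Ioo r R := by
    constructor
    · by_contra h
      push_neg at h
      have hgt : ∀ᵐ x : (Fin d → ℝ), 0 < p x - q x := by
        filter_upwards [hratio, hqpos] with x hx hqx
        have : r * q x < p x := (lt_div_iff₀ hqx).mp hx.1
        nlinarith
      have hz := (integral_eq_zero_iff_of_nonneg_ae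
        (by filter_upwards [hgt] with x hx; exact hx.le) hpq).mp hpq0
      have : ∀ᵐ x : (Fin d → ℝ), False := by
        filter_upwards [hgt, hz] with x hx hzx
        simp only [Pi.zero_apply] at hzx
        rw [hzx] at hx; exact lt_irrefl 0 hx
      rw [ae_iff] at this
      simp only [not_false_iff] at this
      exact hvol (Measure.measure_univ_eq_zero.mp (by simpa using this))
    · by_contra h
      push_neg at h
      have hgt : ∀ᵐ x : (Fin d → ℝ), 0 < q x - p x := by
        filter_upwards [hratio, hqpos] with x hx hqx
        have : p x < R * q x := (div_lt_iff₀ hqx).mp hx.2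
        nlinarith
      have hqp : Integrable (fun x => q x - p x) := hqint.sub hpint
      have hqp0 : ∫ x, (q x - p x) = 0 := by
        rw [integral_sub hqint hpint, hp1, hq1]; ring
      have hz := (integral_eq_zero_iff_of_nonneg_ae
        (by filter_upwards [hgt] with x hx; exact hx.le) hqp).mp hqp0
      have : ∀ᵐ x : (Fin d → ℝ), False := by
        filter_upwards [hgt, hz] with x hx hzx
        simp only [Pi.zero_apply] at hzx
        rw [hzx] at hx; exact lt_irrefl 0 hx
      rw [ae_iff] at this
      simp only [not_false_iff] at this
      exact hvol (Measure.measure_univ_eq_zero.mp (by simpa using this))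
  -- a.e. identity : (p/q) * log(p/q) * q = log(p/q) * p
  have haeq : ∀ᵐ x : (Fin d → ℝ),
      p x / q x * Real.log (p x / q x) * q x = Real.log (p x / q x) * p x := by
    filter_upwards [hqne] with x hx
    field_simp
  constructor
  · -- lower bound: g t = f t - a * (t * log t)
    set g : ℝ → ℝ := fun t => f t - a * (t * Real.log t) with hg
    set g' : ℝ → ℝ := fun t => f' t - a * (Real.log t + 1) with hg'
    set g'' : ℝ → ℝ := fun t => f'' t - a / t with hg''
    have hd : ∀ t ∈ Ioo r R, HasDerivAt g (g' t) t ∧ HasDerivAt g' (g'' t) t := by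
      intro t ht
      have htpos : 0 < t := lt_trans hr ht.1
      constructor
      · exact ((hderiv t ht).1).sub
          ((Real.hasDerivAt_mul_log htpos.ne').const_mul a)
      · have h2 : HasDerivAt (fun s => a * (Real.log s + 1)) (a / t) t := by
          have := ((Real.hasDerivAt_log htpos.ne').add_const 1).const_mul a
          simpa [div_eq_mul_inv] using this
        exact ((hderiv t ht).2).sub h2
    have hnn : ∀ t ∈ Ioo r R, 0 ≤ g'' t := by
      intro t ht
      have htpos : 0 < t := lt_trans hr ht.1
      have := (haA t ht).1
      rw [hg'']
      rw [sub_nonneg, div_le_iff₀ htpos]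
      nlinarith
    have hg1 : g 1 = 0 := by simp [hg, hf1]
    have heq : (fun x => f (p x / q x) * q x - a * (Real.log (p x / q x) * p x))
        =ᵐ[volume] fun x => g (p x / q x) * q x := by
      filter_upwards [haeq] with x hx
      simp only [hg]
      rw [← hx]
      ring
    have hint : Integrable (fun x => g (p x / q x) * q x) :=
      (hIf.sub (hIkl.const_mul a)).congr heq
    have h0 := aux_nonneg hr h1 hd hnn hg1 hq0 hratio hint hpq hpq0
    rw [← integral_congr_ae heq, integral_sub hIf (hIkl.const_mul a),
      integral_const_mul] at h0
    linarith
  · -- upper bound: g t = A * (t * log t) - f t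
    set g : ℝ → ℝ := fun t => A * (t * Real.log t) - f t with hg
    set g' : ℝ → ℝ := fun t => A * (Real.log t + 1) - f' t with hg'
    set g'' : ℝ → ℝ := fun t => A / t - f'' t with hg''
    have hd : ∀ t ∈ Ioo r R, HasDerivAt g (g' t) t ∧ HasDerivAt g' (g'' t) t := by
      intro t ht
      have htpos : 0 < t := lt_trans hr ht.1
      constructor
      · exact ((Real.hasDerivAt_mul_log htpos.ne').const_mul A).sub
          ((hderiv t ht).1)
      · have h2 : HasDerivAt (fun s => A * (Real.log s + 1)) (A / t) t := by
          have := ((Real.hasDerivAt_log htpos.ne').add_const 1).const_mul A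
          simpa [div_eq_mul_inv] using this
        exact h2.sub ((hderiv t ht).2)
    have hnn : ∀ t ∈ Ioo r R, 0 ≤ g'' t := by
      intro t ht
      have htpos : 0 < t := lt_trans hr ht.1
      have := (haA t ht).2
      rw [hg'']
      rw [sub_nonneg, le_div_iff₀ htpos]
      nlinarith
    have hg1 : g 1 = 0 := by simp [hg, hf1]
    have heq : (fun x => A * (Real.log (p x / q x) * p x) - f (p x / q x) * q x)
        =ᵐ[volume] fun x => g (p x / q x) * q x := by
      filter_upwards [haeq] with x hx
      simp only [hg]
      rw [← hx]
      ring
    have hint : Integrable (fun x => g (p x / q x) * q x) :=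
      ((hIkl.const_mul A).sub hIf).congr heq
    have h0 := aux_nonneg hr h1 hd hnn hg1 hq0 hratio hint hpq hpq0
    rw [← integral_congr_ae heq, integral_sub (hIkl.const_mul A) hIf,
      integral_const_mul] at h0
    linarith
end

section
/- Let m and m' be absolutely continuous probability measures on ℝ^d such that there exist constants r, R > 0 with r ≤ m(x)/m'(x) ≤ R for all x. Then KL(m'|m) ≤ (1/r)·KL(m|m'). -/
open MeasureTheory Set

lemma key_phi_deriv (r : ℝ) {s : ℝ} (hs : 0 < s) :
    HasDerivAt (fun t => (t + r) * Real.log t - (1 + r) * (t - 1))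
      (Real.log s + (s + r) / s - (1 + r)) s := by
  have h1 : HasDerivAt (fun t : ℝ => (t + r) * Real.log t)
      (1 * Real.log s + (s + r) * s⁻¹) s :=
    ((hasDerivAt_id s).add_const r).mul (Real.hasDerivAt_log hs.ne')
  have h2 : HasDerivAt (fun t : ℝ => (1 + r) * (t - 1)) ((1 + r) * 1) s :=
    ((hasDerivAt_id s).sub_const 1).const_mul (1 + r)
  have := h1.sub h2
  exact this.congr_deriv (by ring)

lemma key_ineq (r : ℝ) (hr : 0 < r) (hr1 : r ≤ 1) {t : ℝ} (ht : r ≤ t) :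
    (1 + r) * (t - 1) ≤ (t + r) * Real.log t := by
  set φ : ℝ → ℝ := fun t => (t + r) * Real.log t - (1 + r) * (t - 1) with hφ
  have hφ1 : φ 1 = 0 := by simp [hφ]
  have ht0 : 0 < t := lt_of_lt_of_le hr ht
  have hcont : ∀ s : Set ℝ, (∀ x ∈ s, (0:ℝ) < x) → ContinuousOn φ s := by
    intro s hs
    apply ContinuousOn.sub
    · exact (continuousOn_id.add continuousOn_const).mul
        (Real.continuousOn_log.mono (fun x hx => (hs x hx).ne'))
    · fun_prop
  have hdiff : ∀ s : Set ℝ, (∀ x ∈ s, (0:ℝ) < x) → DifferentiableOn ℝ φ s := by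
    intro s hs x hx
    exact ((key_phi_deriv r (hs x hx)).differentiableAt).differentiableWithinAt
  have hderiv : ∀ s : ℝ, 0 < s → deriv φ s = Real.log s + (s + r) / s - (1 + r) :=
    fun s hs => (key_phi_deriv r hs).deriv
  suffices h : 0 ≤ φ t by
    have := h
    simp only [hφ] at this
    linarith
  rcases le_total t 1 with htle | htge
  · have hanti : AntitoneOn φ (Icc r 1) := by
      apply antitoneOn_of_deriv_nonpos (convex_Icc r 1)
      · exact hcont _ (fun x hx => lt_of_lt_of_le hr hx.1)
      · rw [interior_Icc]
        exact hdiff _ (fun x hx => lt_of_lt_of_le hr hx.1.le)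
      · rw [interior_Icc]
        intro s hs
        have hs0 : 0 < s := lt_of_lt_of_le hr hs.1.le
        rw [hderiv s hs0]
        have hlog : Real.log s ≤ s - 1 := Real.log_le_sub_one_of_pos hs0
        have hdivs : (s + r) / s * s = s + r := div_mul_cancel₀ _ hs0.ne'
        nlinarith [hs.1, hs.2, mul_le_mul_of_nonneg_right hlog hs0.le, hdivs, hs0]
    have := hanti ⟨ht, htle⟩ ⟨hr1, le_refl 1⟩ htle
    rw [hφ1] at this
    exact this
  · have hmono : MonotoneOn φ (Ici 1) := by
      apply monotoneOn_of_deriv_nonneg (convex_Ici 1)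
      · exact hcont _ (fun x hx => lt_of_lt_of_le one_pos hx)
      · rw [interior_Ici]
        exact hdiff _ (fun x hx => lt_of_lt_of_le one_pos hx.le)
      · rw [interior_Ici]
        intro s hs
        have hs0 : 0 < s := lt_trans one_pos hs
        rw [hderiv s hs0]
        have hlog : Real.log s⁻¹ ≤ s⁻¹ - 1 := Real.log_le_sub_one_of_pos (inv_pos.mpr hs0)
        rw [Real.log_inv] at hlog
        have hinv : s⁻¹ * s = 1 := inv_mul_cancel₀ hs0.ne'
        have hdivs : (s + r) / s * s = s + r := div_mul_cancel₀ _ hs0.ne'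
        have h1 : (-Real.log s) * s ≤ (s⁻¹ - 1) * s := mul_le_mul_of_nonneg_right hlog hs0.le
        have h2 : s - 1 ≤ Real.log s * s := by nlinarith [hinv]
        have h3 : 0 ≤ (Real.log s + (s + r) / s - (1 + r)) * s := by
          have hss : (1:ℝ) < s := hs
          nlinarith [h2, hdivs, hr1]
        exact (mul_nonneg_iff_of_pos_right hs0).mp h3
    have := hmono (mem_Ici.mpr (le_refl 1)) (mem_Ici.mpr htge) htge
    rw [hφ1] at this
    exact this

/-- KL(m'|m) ≤ (1/r)·KL(m|m') under density ratio bounds. -/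
theorem stmt_1 {d : ℕ} (m m' : (Fin d → ℝ) → ℝ) (r R : ℝ)
    (hr : 0 < r) (hR : 0 < R)
    (hm : Measurable m) (hm' : Measurable m')
    (hm0 : ∀ x, 0 ≤ m x) (hm'0 : ∀ x, 0 ≤ m' x)
    (hm1 : ∫ x, m x = 1) (hm'1 : ∫ x, m' x = 1)
    (hratio : ∀ x, r ≤ m x / m' x ∧ m x / m' x ≤ R) :
    ∫ x, Real.log (m' x / m x) * m' x ≤ (1 / r) * ∫ x, Real.log (m x / m' x) * m x := by
  -- positivity of densities
  have hm'pos : ∀ x, 0 < m' x := by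
    intro x
    rcases (hm'0 x).lt_or_eq with h | h
    · exact h
    · exfalso
      have := (hratio x).1
      rw [← h, div_zero] at this
      linarith
  have hrm : ∀ x, r * m' x ≤ m x := by
    intro x
    have := (hratio x).1
    rwa [le_div_iff₀ (hm'pos x)] at this
  have hmpos : ∀ x, 0 < m x := fun x =>
    lt_of_lt_of_le (mul_pos hr (hm'pos x)) (hrm x)
  -- integrability of densities
  have hIm : Integrable m := by
    by_contra h
    rw [integral_undef h] at hm1
    norm_num at hm1
  have hIm' : Integrable m' := by
    by_contra h
    rw [integral_undef h] at hm'1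
    norm_num at hm'1
  -- r ≤ 1
  have hr1 : r ≤ 1 := by
    have := integral_mono (hIm'.const_mul r) hIm hrm
    rw [integral_const_mul, hm1, hm'1, mul_one] at this
    exact this
  -- bounded log ratio
  set C : ℝ := max |Real.log r| |Real.log R| with hC
  have hlogbd : ∀ x, |Real.log (m x / m' x)| ≤ C := by
    intro x
    have hrat0 : 0 < m x / m' x := div_pos (hmpos x) (hm'pos x)
    rw [abs_le]
    constructor
    · have h1 : Real.log r ≤ Real.log (m x / m' x) := Real.log_le_log hr (hratio x).1
      have h2 : -C ≤ Real.log r := le_trans (neg_le_neg (le_max_left _ _)) (neg_abs_le _)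
      linarith
    · have h1 : Real.log (m x / m' x) ≤ Real.log R := Real.log_le_log hrat0 (hratio x).2
      exact le_trans h1 (le_trans (le_abs_self _) (le_max_right _ _))
  have hmeaslog : Measurable fun x => Real.log (m x / m' x) :=
    Real.measurable_log.comp (hm.div hm')
  -- integrability of KL integrands
  have hI1 : Integrable (fun x => Real.log (m x / m' x) * m x) := by
    apply Integrable.mono' (hIm.const_mul C) (hmeaslog.mul hm).aestronglyMeasurable
    filter_upwards with x
    simp only [Pi.mul_apply]
    rw [Real.norm_eq_abs, abs_mul, abs_of_nonneg (hm0 x)]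
    exact mul_le_mul_of_nonneg_right (hlogbd x) (hm0 x)
  have hlogflip : ∀ x, Real.log (m' x / m x) = -Real.log (m x / m' x) := by
    intro x
    rw [← Real.log_inv, inv_div]
  have hI2 : Integrable (fun x => Real.log (m' x / m x) * m' x) := by
    have hmeaslog2 : Measurable fun x => Real.log (m' x / m x) :=
      Real.measurable_log.comp (hm'.div hm)
    apply Integrable.mono' (hIm'.const_mul C) ((hmeaslog2.mul hm').aestronglyMeasurable)
    filter_upwards with x
    simp only [Pi.mul_apply]
    rw [Real.norm_eq_abs, abs_mul, abs_of_nonneg (hm'0 x), hlogflip x, abs_neg]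
    exact mul_le_mul_of_nonneg_right (hlogbd x) (hm'0 x)
  -- pointwise inequality
  have hpt : ∀ x, Real.log (m' x / m x) * m' x ≤
      (1 / r) * (Real.log (m x / m' x) * m x) - ((1 + r) / r) * (m x - m' x) := by
    intro x
    set a := m x
    set b := m' x
    set L := Real.log (a / b) with hL
    have hb : 0 < b := hm'pos x
    have hkey := key_ineq r hr hr1 (hratio x).1
    have h4 := mul_le_mul_of_nonneg_right hkey hb.le
    have e1 : (1 + r) * (a / b - 1) * b = (1 + r) * (a - b) := by
      field_simp
    have e2 : (a / b + r) * L * b = L * a + r * (L * b) := by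
      field_simp
    rw [e1, e2] at h4
    have e3 : Real.log (b / a) * b = -(L * b) := by
      rw [hlogflip x]; ring
    have e4 : (1 / r) * (L * a) - ((1 + r) / r) * (a - b) =
        (L * a - (1 + r) * (a - b)) / r := by
      ring
    rw [e3, e4, le_div_iff₀ hr]
    nlinarith [h4]
  -- integrate
  have hIrhs : Integrable (fun x =>
      (1 / r) * (Real.log (m x / m' x) * m x) - ((1 + r) / r) * (m x - m' x)) := by
    have hImm : Integrable (fun x => m x - m' x) := hIm.sub hIm'
    exact (hI1.const_mul (1 / r)).sub (hImm.const_mul ((1 + r) / r))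
  have hmono := integral_mono hI2 hIrhs hpt
  have hcalc : (∫ x, ((1 / r) * (Real.log (m x / m' x) * m x) - ((1 + r) / r) * (m x - m' x))) =
      (1 / r) * (∫ x, Real.log (m x / m' x) * m x) - ((1 + r) / r) * ((∫ x, m x) - ∫ x, m' x) := by
    have hImm : Integrable (fun x => m x - m' x) := hIm.sub hIm'
    rw [integral_sub (hI1.const_mul (1 / r)) (hImm.const_mul ((1 + r) / r)),
      integral_const_mul, integral_const_mul, integral_sub hIm hIm']
  rw [hcalc, hm1, hm'1] at hmono
  simpa using hmono
end

section
/- Let G : P(ℝ^d) → ℝ be convex with a normalized flat derivative, minimized by an absolutely continuous measure m*, and satisfy the quadratic growth condition G(m') − G(m*) ≥ λ·KL(m'|m*) for all m' and some λ > 0. If m is an absolutely continuous probability measure with r ≤ m(x)/m*(x) ≤ R for all x (with r, R > 0), then G(m) − G(m*) ≤ (2R/(λr))·‖(δG/δm)(m,·)‖²_{L²(m)} (a flat Polyak–Łojasiewicz inequality). -/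
open MeasureTheory Set

/-- A probability density on ℝ^d with respect to Lebesgue measure. -/
def IsProbDensity {d : ℕ} (p : (Fin d → ℝ) → ℝ) : Prop :=
  Measurable p ∧ (∀ x, 0 ≤ p x) ∧ ∫ x, p x = 1


lemma aux_log_ge {t : ℝ} (ht : 0 < t) : 1 - t⁻¹ ≤ Real.log t := by
  have h := Real.log_le_sub_one_of_pos (inv_pos.mpr ht)
  rw [Real.log_inv] at h
  linarith

lemma aux_H_nonneg {t : ℝ} (ht : 0 < t) : 0 ≤ t * Real.log t - t + 1 := by
  have h := aux_log_ge ht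
  have h2 : t * (1 - t⁻¹) ≤ t * Real.log t := mul_le_mul_of_nonneg_left h ht.le
  have h3 : t * t⁻¹ = 1 := mul_inv_cancel₀ ht.ne'
  nlinarith

lemma aux_H_le {t R : ℝ} (ht : 0 < t) (htR : t ≤ R) :
    t * Real.log t - t + 1 ≤ R ^ 2 + 1 := by
  have h := Real.log_le_sub_one_of_pos ht
  nlinarith

lemma aux_L2 {t : ℝ} (ht : 0 < t) (ht1 : t ≤ 1) :
    (t - 1) ^ 2 ≤ 2 * (t * Real.log t - t + 1) := by
  set f : ℝ → ℝ := fun x => x * Real.log x - x + 1 - (x - 1) ^ 2 / 2 with hf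
  have hd : ∀ x : ℝ, 0 < x → HasDerivAt f (Real.log x - x + 1) x := by
    intro x hx
    have h1 : HasDerivAt (fun y : ℝ => y * Real.log y) (Real.log x + 1) x := by
      have := (hasDerivAt_id x).mul (Real.hasDerivAt_log hx.ne')
      refine this.congr_deriv ?_
      simp [hx.ne']
    have h2 : HasDerivAt (fun y : ℝ => (y - 1) ^ 2 / 2) (x - 1) x := by
      have := (((hasDerivAt_id x).sub_const 1).pow 2).div_const 2
      refine this.congr_deriv ?_
      norm_num
    have := ((h1.sub (hasDerivAt_id x)).add_const 1).sub h2
    refine this.congr_deriv ?_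
    ring
  have hanti : AntitoneOn f (Set.Ioc 0 1) := by
    apply antitoneOn_of_deriv_nonpos (convex_Ioc 0 1)
    · exact fun x hx => (hd x hx.1).continuousAt.continuousWithinAt
    · intro x hx
      rw [interior_Ioc] at hx
      exact (hd x hx.1).differentiableAt.differentiableWithinAt
    · intro x hx
      rw [interior_Ioc] at hx
      rw [(hd x hx.1).deriv]
      have := Real.log_le_sub_one_of_pos hx.1
      linarith
  have h1 : f 1 ≤ f t := hanti ⟨ht, ht1⟩ ⟨one_pos, le_refl 1⟩ ht1
  have hf1 : f 1 = 0 := by simp [hf]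
  rw [hf1] at h1
  simp only [hf] at h1
  linarith

lemma aux_L1 {t : ℝ} (ht : 1 ≤ t) :
    (t - 1) ^ 2 ≤ 2 * t * (t * Real.log t - t + 1) := by
  have ht0 : 0 < t := lt_of_lt_of_le one_pos ht
  set f : ℝ → ℝ := fun x => x * Real.log x - x + 1 - (x - 1) ^ 2 / (2 * x) with hf
  have hd : ∀ x : ℝ, 0 < x → HasDerivAt f (Real.log x - (x ^ 2 - 1) / (2 * x ^ 2)) x := by
    intro x hx
    have h1 : HasDerivAt (fun y : ℝ => y * Real.log y) (Real.log x + 1) x := by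
      have := (hasDerivAt_id x).mul (Real.hasDerivAt_log hx.ne')
      refine this.congr_deriv ?_
      simp [hx.ne']
    have hnum : HasDerivAt (fun y : ℝ => (y - 1) ^ 2) (2 * (x - 1)) x := by
      have := (((hasDerivAt_id x).sub_const 1).pow 2)
      refine this.congr_deriv ?_
      norm_num
    have hden : HasDerivAt (fun y : ℝ => 2 * y) 2 x := by
      simpa using (hasDerivAt_id x).const_mul 2
    have h2 : HasDerivAt (fun y : ℝ => (y - 1) ^ 2 / (2 * y))
        ((2 * (x - 1) * (2 * x) - (x - 1) ^ 2 * 2) / (2 * x) ^ 2) x :=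
      hnum.div hden (by positivity)
    have := ((h1.sub (hasDerivAt_id x)).add_const 1).sub h2
    refine this.congr_deriv ?_
    field_simp
    ring
  have hmono : MonotoneOn f (Set.Ici 1) := by
    apply monotoneOn_of_deriv_nonneg (convex_Ici 1)
    · exact fun x hx => (hd x (lt_of_lt_of_le one_pos hx)).continuousAt.continuousWithinAt
    · intro x hx
      rw [interior_Ici] at hx
      exact (hd x (lt_trans one_pos hx)).differentiableAt.differentiableWithinAt
    · intro x hx
      rw [interior_Ici] at hx
      have hx0 : 0 < x := lt_trans one_pos hx
      rw [(hd x hx0).deriv]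
      have hlog := aux_log_ge hx0
      have hxx : x * x⁻¹ = 1 := mul_inv_cancel₀ hx0.ne'
      have hq : (x ^ 2 - 1) / (2 * x ^ 2) ≤ 1 - x⁻¹ := by
        rw [div_le_iff₀ (by positivity)]
        nlinarith [sq_nonneg (x - 1)]
      linarith
  have h1 : f 1 ≤ f t := hmono (Set.mem_Ici.mpr (le_refl 1)) ht ht
  have hf1 : f 1 = 0 := by simp [hf]
  rw [hf1] at h1
  simp only [hf] at h1
  have h2 : 0 ≤ t * Real.log t - t + 1 - (t - 1) ^ 2 / (2 * t) := h1
  have h3 : (t - 1) ^ 2 / (2 * t) ≤ t * Real.log t - t + 1 := by linarith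
  rw [div_le_iff₀ (by positivity)] at h3
  linarith [h3]

lemma aux_core {r R t : ℝ} (hr : 0 < r) (hR : 1 ≤ R) (hrt : r ≤ t) (htR : t ≤ R) :
    (t - 1) ^ 2 ≤ (2 * R / r) * t * (t * Real.log t - t + 1) := by
  have ht : 0 < t := lt_of_lt_of_le hr hrt
  have hH := aux_H_nonneg ht
  rcases le_total t 1 with h | h
  · have hl := aux_L2 ht h
    have h2 : 2 ≤ 2 * R / r * t := by
      rw [div_mul_eq_mul_div, le_div_iff₀ hr]
      nlinarith
    calc (t - 1) ^ 2 ≤ 2 * (t * Real.log t - t + 1) := hl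
      _ ≤ 2 * R / r * t * (t * Real.log t - t + 1) :=
        mul_le_mul_of_nonneg_right h2 hH
  · have hl := aux_L1 h
    have h2 : 2 * t ≤ 2 * R / r * t := by
      rw [div_mul_eq_mul_div, le_div_iff₀ hr]
      nlinarith
    calc (t - 1) ^ 2 ≤ 2 * t * (t * Real.log t - t + 1) := hl
      _ ≤ 2 * R / r * t * (t * Real.log t - t + 1) :=
        mul_le_mul_of_nonneg_right h2 hH

lemma young_combined {A c b s t H : ℝ} (hA : 0 < A) (ht : 0 < t) (hs : 0 ≤ s) (hH : 0 ≤ H)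
    (hcore : (t - 1) ^ 2 ≤ (4 * A * c) * t * H) :
    b * (t * s) - b * s ≤ A * b ^ 2 * (t * s) + c * (H * s) := by
  have h1 : 0 < 4 * A * t := by positivity
  have key : (4 * A * t) * (b * (t * s) - b * s) ≤
      (4 * A * t) * (A * b ^ 2 * (t * s) + c * (H * s)) := by
    nlinarith [mul_nonneg hs (sq_nonneg (2 * A * b * t - (t - 1))),
      mul_le_mul_of_nonneg_left hcore hs]
  exact le_of_mul_le_mul_left key h1

/-- flat Polyak–Łojasiewicz inequality from KL quadratic growth:
G(m) − G(m*) ≤ (2R/(λr))·‖δG/δm(m,·)‖²_{L²(m)}. -/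
theorem stmt_4 {d : ℕ} (G : ((Fin d → ℝ) → ℝ) → ℝ)
    (DG : ((Fin d → ℝ) → ℝ) → (Fin d → ℝ) → ℝ)
    (lam r R : ℝ) (hlam : 0 < lam) (hr : 0 < r) (hR : 0 < R)
    (hnorm : ∀ p, IsProbDensity p → ∫ x, DG p x * p x = 0)
    (hconv : ∀ p q, IsProbDensity p → IsProbDensity q →
      G p - G q ≤ (∫ x, DG p x * p x) - ∫ x, DG p x * q x)
    (mstar : (Fin d → ℝ) → ℝ) (hmstar : IsProbDensity mstar)
    (hmin : ∀ q, IsProbDensity q → G mstar ≤ G q)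
    (hQG : ∀ q, IsProbDensity q →
      G q - G mstar ≥ lam * ∫ x, Real.log (q x / mstar x) * q x)
    (m : (Fin d → ℝ) → ℝ) (hm : IsProbDensity m)
    (hratio : ∀ x, r ≤ m x / mstar x ∧ m x / mstar x ≤ R)
    (hL2 : Integrable (fun x => (DG m x) ^ 2 * m x))
    (hIDm : Integrable (fun x => DG m x * m x))
    (hIDmstar : Integrable (fun x => DG m x * mstar x)) :
    G m - G mstar ≤ (2 * R / (lam * r)) * ∫ x, (DG m x) ^ 2 * m x := by
  obtain ⟨hmeas_m, hpos_m, hint_m⟩ := hm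
  obtain ⟨hmeas_ms, hpos_ms, hint_ms⟩ := hmstar
  -- mstar is everywhere positive
  have hms_pos : ∀ x, 0 < mstar x := by
    intro x
    rcases (hpos_ms x).lt_or_eq with h | h
    · exact h
    · exfalso
      have h1 := (hratio x).1
      rw [← h, div_zero] at h1
      linarith
  -- integrability of the densities
  have hInt_m : Integrable m := by
    by_contra h
    rw [integral_undef h] at hint_m
    norm_num at hint_m
  have hInt_ms : Integrable mstar := by
    by_contra h
    rw [integral_undef h] at hint_ms
    norm_num at hint_ms
  -- pointwise bound m ≤ R * mstar, hence R ≥ 1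
  have hmR : ∀ x, m x ≤ R * mstar x := by
    intro x
    have := (hratio x).2
    rw [div_le_iff₀ (hms_pos x)] at this
    linarith [this]
  have hR1 : 1 ≤ R := by
    have h1 : ∫ x, m x ≤ ∫ x, R * mstar x :=
      integral_mono hInt_m (hInt_ms.const_mul R) hmR
    rw [integral_const_mul, hint_ms, hint_m] at h1
    linarith
  -- the nonnegative entropy-type integrand K
  set K : (Fin d → ℝ) → ℝ :=
    fun x => Real.log (m x / mstar x) * m x - m x + mstar x with hK
  have hKval : ∀ x, K x = (m x / mstar x * Real.log (m x / mstar x)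
      - m x / mstar x + 1) * mstar x := by
    intro x
    have hs := (hms_pos x).ne'
    field_simp [hK]
    ring
  have hK_nonneg : ∀ x, 0 ≤ K x := by
    intro x
    rw [hKval x]
    have ht : 0 < m x / mstar x := lt_of_lt_of_le hr (hratio x).1
    exact mul_nonneg (aux_H_nonneg ht) (hpos_ms x)
  have hK_bound : ∀ x, K x ≤ (R ^ 2 + 1) * mstar x := by
    intro x
    rw [hKval x]
    have ht : 0 < m x / mstar x := lt_of_lt_of_le hr (hratio x).1
    exact mul_le_mul_of_nonneg_right (aux_H_le ht (hratio x).2) (hpos_ms x)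
  have hK_meas : Measurable K :=
    (((Real.measurable_log.comp (hmeas_m.div hmeas_ms)).mul hmeas_m).sub hmeas_m).add hmeas_ms
  have hK_int : Integrable K := by
    apply Integrable.mono' (hInt_ms.const_mul (R ^ 2 + 1)) hK_meas.aestronglyMeasurable
    filter_upwards with x
    rw [Real.norm_of_nonneg (hK_nonneg x)]
    exact hK_bound x
  -- integrability of the log term
  have hIntlog : Integrable (fun x => Real.log (m x / mstar x) * m x) := by
    have heq : (fun x => Real.log (m x / mstar x) * m x)
        = fun x => K x + (m x - mstar x) := by
      funext x; simp only [hK]; ring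
    rw [heq]
    exact hK_int.add (hInt_m.sub hInt_ms)
  have hKL : ∫ x, K x = ∫ x, Real.log (m x / mstar x) * m x := by
    have hIA : Integrable (fun x => Real.log (m x / mstar x) * m x - m x) :=
      hIntlog.sub hInt_m
    have : ∫ x, K x = (∫ x, Real.log (m x / mstar x) * m x) - (∫ x, m x) + ∫ x, mstar x := by
      simp only [hK]
      rw [integral_add hIA hInt_ms, integral_sub hIntlog hInt_m]
    rw [this, hint_m, hint_ms]
    ring
  -- the key pointwise inequality
  have hP : ∀ x, DG m x * m x - DG m x * mstar x ≤
      (R / (lam * r)) * ((DG m x) ^ 2 * m x) + (lam / 2) * K x := by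
    intro x
    have hs := hms_pos x
    have ht : 0 < m x / mstar x := lt_of_lt_of_le hr (hratio x).1
    have hts : m x = (m x / mstar x) * mstar x := (div_mul_cancel₀ _ hs.ne').symm
    have hcore := aux_core hr hR1 (hratio x).1 (hratio x).2
    have hcore' : ((m x / mstar x) - 1) ^ 2 ≤
        (4 * (R / (lam * r)) * (lam / 2)) * (m x / mstar x) *
          ((m x / mstar x) * Real.log (m x / mstar x) - (m x / mstar x) + 1) := by
      have hcc : (4 * (R / (lam * r)) * (lam / 2)) = 2 * R / r := by
        field_simp
        ring
      rw [hcc]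
      exact hcore
    have hy := young_combined (b := DG m x) (s := mstar x)
      (by positivity : (0:ℝ) < R / (lam * r)) ht (hpos_ms x)
      (aux_H_nonneg ht) hcore'
    rw [hKval x]
    calc DG m x * m x - DG m x * mstar x
        = DG m x * ((m x / mstar x) * mstar x) - DG m x * mstar x := by rw [← hts]
      _ ≤ (R / (lam * r)) * (DG m x) ^ 2 * ((m x / mstar x) * mstar x)
            + (lam / 2) * (((m x / mstar x) * Real.log (m x / mstar x)
              - (m x / mstar x) + 1) * mstar x) := hy
      _ = (R / (lam * r)) * ((DG m x) ^ 2 * m x)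
            + (lam / 2) * (((m x / mstar x) * Real.log (m x / mstar x)
              - (m x / mstar x) + 1) * mstar x) := by rw [← hts]; ring
  -- integrate
  have hg_int : Integrable (fun x => (R / (lam * r)) * ((DG m x) ^ 2 * m x)
      + (lam / 2) * K x) :=
    (hL2.const_mul _).add (hK_int.const_mul _)
  have step2 : ∫ x, (DG m x * m x - DG m x * mstar x) ≤
      ∫ x, ((R / (lam * r)) * ((DG m x) ^ 2 * m x) + (lam / 2) * K x) :=
    integral_mono (hIDm.sub hIDmstar) hg_int hP
  have step3 : ∫ x, ((R / (lam * r)) * ((DG m x) ^ 2 * m x) + (lam / 2) * K x)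
      = (R / (lam * r)) * (∫ x, (DG m x) ^ 2 * m x)
        + (lam / 2) * ∫ x, Real.log (m x / mstar x) * m x := by
    rw [integral_add (hL2.const_mul _) (hK_int.const_mul _),
      integral_const_mul, integral_const_mul, hKL]
  have step1 : G m - G mstar ≤ ∫ x, (DG m x * m x - DG m x * mstar x) := by
    have h := hconv m mstar ⟨hmeas_m, hpos_m, hint_m⟩ ⟨hmeas_ms, hpos_ms, hint_ms⟩
    rw [integral_sub hIDm hIDmstar]
    exact h
  have hqg := hQG m ⟨hmeas_m, hpos_m, hint_m⟩
  have hfin : G m - G mstar ≤ (R / (lam * r)) * (∫ x, (DG m x) ^ 2 * m x)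
      + (lam / 2) * ∫ x, Real.log (m x / mstar x) * m x := by
    calc G m - G mstar ≤ _ := step1
      _ ≤ _ := step2
      _ = _ := step3
  have hconst : 2 * R / (lam * r) = 2 * (R / (lam * r)) := by ring
  rw [hconst]
  set I := ∫ x, (DG m x) ^ 2 * m x
  set L := ∫ x, Real.log (m x / mstar x) * m x
  have h2 : lam * L ≤ G m - G mstar := hqg
  have h3 : (lam / 2) * L = (lam * L) / 2 := by ring
  rw [h3] at hfin
  linarith
end

section
/- Let G : P(ℝ^d) → ℝ be convex with a normalized flat derivative, minimized by an absolutely continuous measure m*, and suppose there exists λ > 0 such that G(m') − G(m*) ≥ λ·χ²(m*|m') for all m'. Then for any absolutely continuous probability measure m, G(m) − G(m*) ≤ (1/λ)·‖(δG/δm)(m,·)‖²_{L²(m)}. -/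
open MeasureTheory Set

lemma isProbDensity_integrable {d : ℕ} {p : (Fin d → ℝ) → ℝ} (hp : IsProbDensity p) :
    Integrable p := by
  by_contra h
  have := hp.2.2
  rw [integral_undef h] at this
  norm_num at this

set_option maxHeartbeats 1000000 in
/-- flat Polyak–Łojasiewicz inequality from χ² quadratic growth:
G(m) − G(m*) ≤ (1/λ)·‖δG/δm(m,·)‖²_{L²(m)}. -/
theorem stmt_5 {d : ℕ} (G : ((Fin d → ℝ) → ℝ) → ℝ)
    (DG : ((Fin d → ℝ) → ℝ) → (Fin d → ℝ) → ℝ)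
    (lam : ℝ) (hlam : 0 < lam)
    (hnorm : ∀ p, IsProbDensity p → ∫ x, DG p x * p x = 0)
    (hconv : ∀ p q, IsProbDensity p → IsProbDensity q →
      G p - G q ≤ (∫ x, DG p x * p x) - ∫ x, DG p x * q x)
    (mstar : (Fin d → ℝ) → ℝ) (hmstar : IsProbDensity mstar)
    (hmin : ∀ q, IsProbDensity q → G mstar ≤ G q)
    (hQG : ∀ q, IsProbDensity q →
      G q - G mstar ≥ lam * ∫ x, (mstar x / q x - 1) ^ 2 * q x)
    (m : (Fin d → ℝ) → ℝ) (hm : IsProbDensity m)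
    (hL2 : Integrable (fun x => (DG m x) ^ 2 * m x))
    (hchi : Integrable (fun x => (mstar x / m x - 1) ^ 2 * m x))
    (hIDm : Integrable (fun x => DG m x * m x))
    (hIDmstar : Integrable (fun x => DG m x * mstar x)) :
    G m - G mstar ≤ (1 / lam) * ∫ x, (DG m x) ^ 2 * m x := by
  have hmInt : Integrable m := isProbDensity_integrable hm
  have hmsInt : Integrable mstar := isProbDensity_integrable hmstar
  have hΔ0 : 0 ≤ G m - G mstar := by have := hmin m hm; linarith
  set N : Set (Fin d → ℝ) := m ⁻¹' {0} with hNdef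
  have hN : MeasurableSet N := hm.1 (measurableSet_singleton 0)
  set s : ℝ := ∫ x in N, mstar x with hsdef
  have hs_nonneg : 0 ≤ s := setIntegral_nonneg hN (fun x _ => hmstar.2.1 x)
  -- Step A: for each t ∈ (1/2, 1), lam * t^2 * s ≤ (G m - G mstar) * (1 - t)
  have hkey : ∀ t : ℝ, 1/2 < t → t < 1 →
      lam * t ^ 2 * s ≤ (G m - G mstar) * (1 - t) := by
    intro t ht2 ht1
    have ht0 : (0:ℝ) < t := by linarith
    have htl : (0:ℝ) < 1 - t := by linarith
    set q : (Fin d → ℝ) → ℝ := fun x => (1 - t) * mstar x + t * m x with hqdef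
    have hq_nonneg : ∀ x, 0 ≤ q x := fun x =>
      add_nonneg (mul_nonneg htl.le (hmstar.2.1 x)) (mul_nonneg ht0.le (hm.2.1 x))
    have hq : IsProbDensity q := by
      refine ⟨(hmstar.1.const_mul _).add (hm.1.const_mul _), hq_nonneg, ?_⟩
      rw [integral_add (hmsInt.const_mul _) (hmInt.const_mul _), integral_const_mul,
        integral_const_mul, hmstar.2.2, hm.2.2]
      ring
    -- upper bound: G q - G mstar ≤ G m - G mstar
    have hGq : G q - G mstar ≤ G m - G mstar := by
      have h0 : ∫ x, DG q x * q x = 0 := hnorm q hq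
      have h1 := hconv q mstar hq hmstar
      have h2 := hconv q m hq hm
      rw [h0] at h1 h2
      by_cases hA : Integrable (fun x => DG q x * mstar x)
      · by_cases hB : Integrable (fun x => DG q x * m x)
        · have hsplit : (1 - t) * (∫ x, DG q x * mstar x) + t * (∫ x, DG q x * m x) = 0 := by
            rw [← integral_const_mul, ← integral_const_mul,
              ← integral_add (hA.const_mul _) (hB.const_mul _), ← h0]
            apply integral_congr_ae
            filter_upwards with x
            simp only [hqdef]
            ring
          set IA := ∫ x, DG q x * mstar x
          set IB := ∫ x, DG q x * m x
          rcases le_or_gt 0 IA with hIA | hIA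
          · linarith
          · have hIB : 0 ≤ IB := by nlinarith
            linarith
        · rw [integral_undef hB] at h2
          linarith
      · rw [integral_undef hA] at h1
        linarith
    -- the chi-square integral for q
    have hgrow := hQG q hq
    set g : (Fin d → ℝ) → ℝ := fun x => (mstar x / q x - 1) ^ 2 * q x with hgdef
    have hg_nonneg : ∀ x, 0 ≤ g x := fun x => mul_nonneg (sq_nonneg _) (hq_nonneg x)
    have hg_meas : Measurable g :=
      (((hmstar.1.div hq.1).sub measurable_const).pow measurable_const).mul hq.1
    have hg_bound : ∀ x, g x ≤ (2 / (1 - t)) * (m x + mstar x) := by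
      intro x
      have hmx := hm.2.1 x
      have hmsx := hmstar.2.1 x
      set c : ℝ := 2 / (1 - t) with hcdef
      have hc : c * (1 - t) = 2 := by rw [hcdef]; field_simp
      have hc0 : 0 ≤ c := by rw [hcdef]; positivity
      rcases eq_or_lt_of_le (hq_nonneg x) with hqx | hqx
      · have hq0 : (1 - t) * mstar x + t * m x = 0 := hqx.symm
        have hms0 : mstar x = 0 := by nlinarith
        have hm0 : m x = 0 := by nlinarith
        have hq0' : q x = 0 := hqx.symm
        simp [hgdef, hq0', hms0, hm0]
      · have hqne : q x ≠ 0 := ne_of_gt hqx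
        have e1 : g x = (mstar x - q x) ^ 2 / q x := by
          simp only [hgdef]
          field_simp
        rw [e1, div_le_iff₀ hqx]
        have hq_lb : (1 - t) * (m x + mstar x) ≤ q x := by
          show _ ≤ (1 - t) * mstar x + t * m x; nlinarith
        have h1t2 : (0:ℝ) ≤ 1 - t ^ 2 := by nlinarith
        have hsq : (mstar x - q x) ^ 2 ≤ (m x + mstar x) ^ 2 := by
          show (mstar x - ((1 - t) * mstar x + t * m x)) ^ 2 ≤ _
          nlinarith [mul_nonneg h1t2 (sq_nonneg (mstar x - m x)), mul_nonneg hmx hmsx]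
        nlinarith [mul_le_mul_of_nonneg_left hq_lb (mul_nonneg hc0 (add_nonneg hmx hmsx)),
          sq_nonneg (m x + mstar x), mul_nonneg hmx hmsx]
    have hg_int : Integrable g := by
      refine Integrable.mono ((hmInt.add hmsInt).const_mul (2 / (1 - t)))
        hg_meas.aestronglyMeasurable ?_
      filter_upwards with x
      rw [Real.norm_eq_abs, Real.norm_eq_abs, abs_of_nonneg (hg_nonneg x)]
      have h1 : g x ≤ 2 / (1 - t) * (m x + mstar x) := hg_bound x
      exact h1.trans (le_abs_self _)
    -- indicator lower bound
    have hind_le : ∀ x, N.indicator (fun x => t ^ 2 / (1 - t) * mstar x) x ≤ g x := by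
      intro x
      by_cases hxN : x ∈ N
      · rw [Set.indicator_of_mem hxN]
        have hm0 : m x = 0 := hxN
        rcases eq_or_lt_of_le (hmstar.2.1 x) with hms | hms
        · rw [← hms, mul_zero]
          exact hg_nonneg x
        · have hqx : q x = (1 - t) * mstar x := by
            show (1 - t) * mstar x + t * m x = _
            rw [hm0]; ring
          have hmsne : mstar x ≠ 0 := hms.ne'
          have htne : (1:ℝ) - t ≠ 0 := htl.ne'
          have hval : g x = t ^ 2 / (1 - t) * mstar x := by
            simp only [hgdef, hqx]
            field_simp
            ring
          rw [hval]
      · rw [Set.indicator_of_notMem hxN]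
        exact hg_nonneg x
    have hind_int : Integrable (N.indicator fun x => t ^ 2 / (1 - t) * mstar x) :=
      (hmsInt.const_mul _).indicator hN
    have hIle : ∫ x, N.indicator (fun x => t ^ 2 / (1 - t) * mstar x) x ≤ ∫ x, g x :=
      integral_mono hind_int hg_int hind_le
    have hIval : ∫ x, N.indicator (fun x => t ^ 2 / (1 - t) * mstar x) x
        = t ^ 2 / (1 - t) * s := by
      rw [integral_indicator hN, integral_const_mul]
    have hchain : lam * (t ^ 2 / (1 - t) * s) ≤ G m - G mstar := by
      have h1 : lam * (t ^ 2 / (1 - t) * s) ≤ lam * ∫ x, g x := by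
        apply mul_le_mul_of_nonneg_left _ hlam.le
        rw [← hIval]; exact hIle
      linarith [hgrow, hGq]
    have := mul_le_mul_of_nonneg_right hchain htl.le
    have hid : lam * (t ^ 2 / (1 - t) * s) * (1 - t) = lam * t ^ 2 * s := by
      field_simp
    linarith [this, hid.symm.le, hid.le]
  -- Step A': s = 0
  have hs0 : s = 0 := by
    by_contra hs
    have hspos : 0 < s := lt_of_le_of_ne hs_nonneg (Ne.symm hs)
    set Δ := G m - G mstar with hΔdef
    set ε : ℝ := min (1/4) (lam * s / (4 * (Δ + 1))) with hεdef
    have hΔ1 : (0:ℝ) < Δ + 1 := by linarith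
    have hε0 : 0 < ε := lt_min (by norm_num) (by positivity)
    have hε4 : ε ≤ 1/4 := min_le_left _ _
    have hε2 : ε * (4 * (Δ + 1)) ≤ lam * s := by
      have h := min_le_right (1/4) (lam * s / (4 * (Δ + 1)))
      calc ε * (4 * (Δ + 1)) ≤ (lam * s / (4 * (Δ + 1))) * (4 * (Δ + 1)) :=
            mul_le_mul_of_nonneg_right h (by positivity)
        _ = lam * s := div_mul_cancel₀ _ (by positivity)
    have hk := hkey (1 - ε) (by linarith) (by linarith)
    have h1e : (1:ℝ) - (1 - ε) = ε := by ring
    rw [h1e] at hk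
    have h34 : (1:ℝ)/2 ≤ (1 - ε) ^ 2 := by nlinarith
    have hP : 0 < lam * s := mul_pos hlam hspos
    have hmain : lam * s * (1/2) ≤ Δ * ε := by
      nlinarith [mul_le_mul_of_nonneg_left h34 hP.le, hk]
    nlinarith [hmain, hε2, mul_nonneg hε0.le hΔ0, hε0]
  -- mstar vanishes a.e. on N
  have hae : ∀ᵐ x, m x = 0 → mstar x = 0 := by
    have hind_int : Integrable (N.indicator mstar) := hmsInt.indicator hN
    have hind_nonneg : 0 ≤ N.indicator mstar := fun x =>
      Set.indicator_nonneg (fun y _ => hmstar.2.1 y) x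
    have hz : ∫ x, N.indicator mstar x = 0 := by
      rw [integral_indicator hN]; exact hs0
    have h0 := (integral_eq_zero_iff_of_nonneg hind_nonneg hind_int).mp hz
    filter_upwards [h0] with x hx hmx
    have hxN : x ∈ N := hmx
    simpa [Set.indicator_of_mem hxN] using hx
  -- Step B: main chain
  set u : (Fin d → ℝ) → ℝ := fun x => mstar x / m x - 1 with hudef
  have heq : (fun x => DG m x * mstar x - DG m x * m x)
      =ᵐ[volume] (fun x => DG m x * u x * m x) := by
    filter_upwards [hae] with x hx
    by_cases hmx : m x = 0
    · simp [hudef, hmx, hx hmx]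
    · simp only [hudef]
      field_simp
  have hIuL : Integrable (fun x => DG m x * u x * m x) := (hIDmstar.sub hIDm).congr heq
  have hval : ∫ x, DG m x * u x * m x = ∫ x, DG m x * mstar x := by
    rw [← integral_congr_ae heq, integral_sub hIDmstar hIDm, hnorm m hm, sub_zero]
  have h1 : G m - G mstar ≤ - ∫ x, DG m x * mstar x := by
    have := hconv m mstar hm hmstar
    rw [hnorm m hm] at this
    linarith
  have hRHSint : Integrable (fun x =>
      1 / (2 * lam) * ((DG m x) ^ 2 * m x) + lam / 2 * ((u x) ^ 2 * m x)) :=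
    (hL2.const_mul _).add (hchi.const_mul _)
  have hmono : ∫ x, -(DG m x * u x * m x)
      ≤ ∫ x, (1 / (2 * lam) * ((DG m x) ^ 2 * m x) + lam / 2 * ((u x) ^ 2 * m x)) := by
    apply integral_mono hIuL.neg hRHSint
    intro x
    simp only [Pi.neg_apply]
    have hlne : lam ≠ 0 := hlam.ne'
    have h2l : (0:ℝ) < 2 * lam := by linarith
    rw [← mul_le_mul_iff_right₀ h2l]
    have hexp : 2 * lam * (1 / (2 * lam) * ((DG m x) ^ 2 * m x)
        + lam / 2 * ((u x) ^ 2 * m x))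
        = (DG m x) ^ 2 * m x + lam ^ 2 * ((u x) ^ 2 * m x) := by
      field_simp
    rw [hexp]
    nlinarith [mul_nonneg (sq_nonneg (DG m x + lam * u x)) (hm.2.1 x)]
  have hIRHS : ∫ x, (1 / (2 * lam) * ((DG m x) ^ 2 * m x) + lam / 2 * ((u x) ^ 2 * m x))
      = 1 / (2 * lam) * (∫ x, (DG m x) ^ 2 * m x) + lam / 2 * (∫ x, (u x) ^ 2 * m x) := by
    rw [integral_add (hL2.const_mul _) (hchi.const_mul _), integral_const_mul,
      integral_const_mul]
  have hQGm := hQG m hm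
  have hneg : ∫ x, -(DG m x * u x * m x) = - ∫ x, DG m x * u x * m x := integral_neg _
  have hfin : G m - G mstar
      ≤ 1 / (2 * lam) * (∫ x, (DG m x) ^ 2 * m x) + lam / 2 * (∫ x, (u x) ^ 2 * m x) := by
    rw [← hIRHS]
    calc G m - G mstar ≤ - ∫ x, DG m x * mstar x := h1
      _ = ∫ x, -(DG m x * u x * m x) := by rw [hneg, hval]
      _ ≤ _ := hmono
  have hhalf : (1:ℝ) / lam = 2 * (1 / (2 * lam)) := by field_simp
  have hQGm' : lam * ∫ x, (u x) ^ 2 * m x ≤ G m - G mstar := hQGm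
  rw [hhalf]
  linarith
end

section
/- Let f : ℝ^d → ℝ be differentiable and convex, attaining its minimum at x_p, and suppose the quadratic growth condition f(x) − f(x_p) ≥ (μ/2)‖x − x_p‖² holds for all x with some μ > 0. Then f satisfies a Polyak–Łojasiewicz inequality: there exists κ > 0 (one may take κ = μ/2) such that (1/κ)·‖∇f(x)‖² ≥ f(x) − f(x_p) for all x ∈ ℝ^d. -/
lemma grad_inner_eq {d : ℕ} (f : EuclideanSpace ℝ (Fin d) → ℝ)
    (hdiff : Differentiable ℝ f) (x v : EuclideanSpace ℝ (Fin d)) :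
    inner ℝ (gradient f x) v = fderiv ℝ f x v := by
  have h := (hdiff x).hasGradientAt
  rw [hasGradientAt_iff_hasFDerivAt] at h
  rw [h.fderiv]
  simp

/-- in ℝ^d, convexity plus quadratic growth implies the
Polyak–Łojasiewicz inequality with κ = μ/2. -/
theorem stmt_8 {d : ℕ} (f : EuclideanSpace ℝ (Fin d) → ℝ)
    (xp : EuclideanSpace ℝ (Fin d)) (μ : ℝ) (hμ : 0 < μ)
    (hdiff : Differentiable ℝ f)
    (hconv : ConvexOn ℝ Set.univ f)
    (hmin : ∀ x, f xp ≤ f x)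
    (hQG : ∀ x, f x - f xp ≥ μ / 2 * ‖x - xp‖ ^ 2) :
    ∃ κ > (0:ℝ), κ = μ / 2 ∧
      ∀ x, (1 / κ) * ‖gradient f x‖ ^ 2 ≥ f x - f xp := by
  refine ⟨μ / 2, by linarith, rfl, fun x => ?_⟩
  -- subgradient inequality: f x - f xp ≤ ⟨∇f x, x - xp⟩
  set g : ℝ → ℝ := fun t => f (xp + t • (x - xp)) with hg
  have hline : ∀ t : ℝ, HasDerivAt (fun t : ℝ => xp + t • (x - xp)) (x - xp) t := by
    intro t
    simpa using ((hasDerivAt_id t).smul_const (x - xp)).const_add xp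
  have hgconv : ConvexOn ℝ Set.univ g := by
    have := hconv.comp_affineMap (AffineMap.lineMap xp x : ℝ →ᵃ[ℝ] _)
    simp only [Set.preimage_univ] at this
    have heq : g = f ∘ (AffineMap.lineMap xp x) := by
      funext t
      simp only [hg, Function.comp_apply, AffineMap.lineMap_apply_module]
      congr 1
      module
    rw [heq]
    exact this
  have hgd : HasDerivAt g (fderiv ℝ f x (x - xp)) 1 := by
    have h1 : xp + (1:ℝ) • (x - xp) = x := by module
    have := (hdiff (xp + (1:ℝ) • (x - xp))).hasFDerivAt.comp_hasDerivAt 1 (hline 1)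
    rw [h1] at this
    exact this
  have hslope : slope g 0 1 ≤ fderiv ℝ f x (x - xp) :=
    hgconv.slope_le_of_hasDerivAt (Set.mem_univ 0) (Set.mem_univ 1) one_pos hgd
  have hsub : f x - f xp ≤ inner ℝ (gradient f x) (x - xp) := by
    rw [grad_inner_eq f hdiff]
    simpa [slope, hg] using hslope
  have hcs : inner ℝ (gradient f x) (x - xp) ≤ ‖gradient f x‖ * ‖x - xp‖ :=
    real_inner_le_norm _ _
  have hA : f x - f xp ≤ ‖gradient f x‖ * ‖x - xp‖ := hsub.trans hcs
  have hq := hQG x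
  have h0 : 0 ≤ f x - f xp := by linarith [hmin x]
  have hGn : 0 ≤ ‖gradient f x‖ := norm_nonneg _
  have hNn : 0 ≤ ‖x - xp‖ := norm_nonneg _
  rw [ge_iff_le, div_mul_eq_mul_div, le_div_iff₀ (by linarith)]
  have h1 : μ / 2 * (f x - f xp) ^ 2 ≤ μ / 2 * (‖gradient f x‖ * ‖x - xp‖) ^ 2 :=
    mul_le_mul_of_nonneg_left (pow_le_pow_left₀ h0 hA 2) (by linarith)
  have h2 : ‖gradient f x‖ ^ 2 * (μ / 2 * ‖x - xp‖ ^ 2) ≤ ‖gradient f x‖ ^ 2 * (f x - f xp) :=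
    mul_le_mul_of_nonneg_left hq (sq_nonneg _)
  nlinarith [sq_nonneg ‖gradient f x‖, h0, h1, h2]
end

section
/- Let m, m* be absolutely continuous probability measures and suppose r ≤ m(x)/m*(x) ≤ R pointwise with 0 < r ≤ R. Then χ²(m*|m) ≤ (2R/r)·KL(m|m*). -/
open MeasureTheory Set

lemma logA (t : ℝ) (ht : 1 ≤ t) : (t-1)^2/(2*t) ≤ t * Real.log t - t + 1 := by
  set F : ℝ → ℝ := fun u => u * Real.log u - u + 1 - (u-1)^2/(2*u) with hF
  have hderiv : ∀ u : ℝ, 0 < u → HasDerivAt F (Real.log u - (u^2-1)/(2*u^2)) u := by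
    intro u hu
    have h1 : HasDerivAt (fun u : ℝ => u * Real.log u) (Real.log u + 1) u :=
      Real.hasDerivAt_mul_log hu.ne'
    have h2 : HasDerivAt (fun u : ℝ => (u-1)^2) (2*(u-1)) u := by
      have := ((hasDerivAt_id u).sub_const 1).pow 2
      exact this.congr_deriv (by simp)
    have h3 : HasDerivAt (fun u : ℝ => 2*u) 2 u := by
      simpa using (hasDerivAt_id u).const_mul 2
    have h4 : HasDerivAt (fun u : ℝ => (u-1)^2/(2*u))
        ((2*(u-1)*(2*u) - (u-1)^2*2)/(2*u)^2) u := h2.div h3 (by positivity)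
    have h5 := ((h1.sub (hasDerivAt_id u)).add_const 1).sub h4
    refine h5.congr_deriv ?_
    field_simp
    ring
  have hmono : MonotoneOn F (Icc 1 t) := by
    apply monotoneOn_of_hasDerivWithinAt_nonneg (convex_Icc 1 t)
      (f' := fun u => Real.log u - (u^2-1)/(2*u^2))
    · intro u hu
      have hu0 : (0:ℝ) < u := lt_of_lt_of_le one_pos hu.1
      exact (hderiv u hu0).continuousAt.continuousWithinAt
    · intro u hu
      rw [interior_Icc] at hu
      exact ((hderiv u (lt_trans one_pos hu.1)).hasDerivWithinAt)
    · intro u hu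
      rw [interior_Icc] at hu
      have hu0 : (0:ℝ) < u := lt_trans one_pos hu.1
      have hlog : 1 - u⁻¹ ≤ Real.log u := Real.one_sub_inv_le_log_of_pos hu0
      have key : (u^2-1)/(2*u^2) ≤ 1 - u⁻¹ := by
        rw [div_le_iff₀ (by positivity)]
        have h : (1 - u⁻¹) * (2*u^2) = 2*u^2 - 2*u := by
          field_simp
        rw [h]
        nlinarith [sq_nonneg (u-1)]
      linarith
  have h1m : (1:ℝ) ∈ Icc 1 t := ⟨le_refl 1, ht⟩
  have htm : t ∈ Icc 1 t := ⟨ht, le_refl t⟩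
  have := hmono h1m htm ht
  have hF1 : F 1 = 0 := by simp [hF]
  rw [hF1] at this
  simp only [hF] at this
  linarith

lemma logB (t : ℝ) (ht0 : 0 < t) (ht1 : t ≤ 1) : (1-t)^2/2 ≤ t * Real.log t - t + 1 := by
  set G : ℝ → ℝ := fun u => u * Real.log u - u + 1 - (1-u)^2/2 with hG
  have hderiv : ∀ u : ℝ, 0 < u → HasDerivAt G (Real.log u - u + 1) u := by
    intro u hu
    have h1 : HasDerivAt (fun u : ℝ => u * Real.log u) (Real.log u + 1) u :=
      Real.hasDerivAt_mul_log hu.ne'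
    have h2 : HasDerivAt (fun u : ℝ => (1-u)^2/2) ((2*(1-u)*(-1))/2) u := by
      have := ((hasDerivAt_const u (1:ℝ)).sub (hasDerivAt_id u)).pow 2
      simpa using (this.div_const 2)
    have h5 := ((h1.sub (hasDerivAt_id u)).add_const 1).sub h2
    refine h5.congr_deriv ?_
    ring
  have hanti : AntitoneOn G (Icc t 1) := by
    apply antitoneOn_of_hasDerivWithinAt_nonpos (convex_Icc t 1)
      (f' := fun u => Real.log u - u + 1)
    · intro u hu
      exact (hderiv u (lt_of_lt_of_le ht0 hu.1)).continuousAt.continuousWithinAt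
    · intro u hu
      rw [interior_Icc] at hu
      exact (hderiv u (lt_trans ht0 hu.1)).hasDerivWithinAt
    · intro u hu
      rw [interior_Icc] at hu
      have hu0 : (0:ℝ) < u := lt_trans ht0 hu.1
      have := Real.log_le_sub_one_of_pos hu0
      linarith
  have htm : t ∈ Icc t 1 := ⟨le_refl t, ht1⟩
  have h1m : (1:ℝ) ∈ Icc t 1 := ⟨ht1, le_refl 1⟩
  have := hanti htm h1m ht1
  have hG1 : G 1 = 0 := by simp [hG]
  rw [hG1] at this
  simp only [hG] at this
  linarith

lemma stmt15_core {r R t : ℝ} (hr : 0 < r) (hrR : r ≤ R) (hR1 : 1 ≤ R)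
    (h1 : r ≤ t) (h2 : t ≤ R) :
    (t⁻¹ - 1)^2 * t ≤ (2*R/r) * (t * Real.log t - t + 1) := by
  have ht : 0 < t := lt_of_lt_of_le hr h1
  have hL : (t⁻¹ - 1)^2 * t = (1-t)^2/t := by
    field_simp
  rw [hL]
  have key : r * (1-t)^2 ≤ 2*R * (t * (t * Real.log t - t + 1)) := by
    rcases le_total t 1 with hle | hge
    · have hB := logB t ht hle
      have hRt : r ≤ R * t := by nlinarith
      nlinarith [mul_le_mul_of_nonneg_left hB (by positivity : (0:ℝ) ≤ 2*R*t),
        mul_nonneg (sub_nonneg.2 hRt) (sq_nonneg (1-t))]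
    · have hA := logA t hge
      have hq : (t-1)^2/(2*t) * (2*t) = (t-1)^2 := div_mul_cancel₀ _ (by positivity)
      nlinarith [mul_le_mul_of_nonneg_left hA (by positivity : (0:ℝ) ≤ 2*R*t),
        mul_nonneg (sub_nonneg.2 hrR) (sq_nonneg (1-t))]
  rw [div_le_iff₀ ht, div_mul_eq_mul_div, div_mul_eq_mul_div, le_div_iff₀ hr]
  nlinarith [key]

/-- χ²(m*|m) ≤ (2R/r)·KL(m|m*) under density ratio bounds. -/
theorem stmt_15 {d : ℕ} (m mstar : (Fin d → ℝ) → ℝ) (r R : ℝ)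
    (hr : 0 < r) (hrR : r ≤ R)
    (hm : Measurable m) (hmstar : Measurable mstar)
    (hm0 : ∀ x, 0 ≤ m x) (hmstar0 : ∀ x, 0 ≤ mstar x)
    (hm1 : ∫ x, m x = 1) (hmstar1 : ∫ x, mstar x = 1)
    (hratio : ∀ x, r ≤ m x / mstar x ∧ m x / mstar x ≤ R) :
    ∫ x, (mstar x / m x - 1) ^ 2 * m x
      ≤ (2 * R / r) * ∫ x, Real.log (m x / mstar x) * m x := by
  -- positivity of densities
  have hbpos : ∀ x, 0 < mstar x := by
    intro x
    rcases (lt_or_eq_of_le (hmstar0 x)) with h | h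
    · exact h
    · exfalso
      have := (hratio x).1
      rw [← h, div_zero] at this
      linarith
  have hapos : ∀ x, 0 < m x := by
    intro x
    have h := (hratio x).1
    have : 0 < m x / mstar x := lt_of_lt_of_le hr h
    exact (div_pos_iff.mp this).resolve_right (fun h' => absurd h'.2 (not_lt.2 (hbpos x).le)) |>.1
  -- integrability of m, mstar
  have hm_int : Integrable m := by
    by_contra h
    rw [integral_undef h] at hm1
    norm_num at hm1
  have hmstar_int : Integrable mstar := by
    by_contra h
    rw [integral_undef h] at hmstar1
    norm_num at hmstar1
  -- R ≥ 1
  have hR1 : 1 ≤ R := by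
    have hle : ∀ x, m x ≤ R * mstar x := by
      intro x
      have h := (hratio x).2
      rwa [div_le_iff₀ (hbpos x)] at h
    have := integral_mono hm_int (hmstar_int.const_mul R) hle
    rw [hm1, integral_const_mul, hmstar1, mul_one] at this
    exact this
  -- the KL-type integrand
  set k : (Fin d → ℝ) → ℝ := fun x => Real.log (m x / mstar x) * m x - m x + mstar x with hk
  -- integrability of log term
  have hmeas_log : AEStronglyMeasurable (fun x => Real.log (m x / mstar x) * m x) volume :=
    (((hm.div hmstar).log).mul hm).aestronglyMeasurable
  set C : ℝ := max |Real.log r| |Real.log R| with hC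
  have hlog_bound : ∀ x, |Real.log (m x / mstar x)| ≤ C := by
    intro x
    have h1 := (hratio x).1
    have h2 := (hratio x).2
    have hl1 : Real.log r ≤ Real.log (m x / mstar x) := Real.log_le_log hr h1
    have hl2 : Real.log (m x / mstar x) ≤ Real.log R := Real.log_le_log (lt_of_lt_of_le hr h1) h2
    rw [abs_le]
    constructor
    · calc -C ≤ -|Real.log r| := by simp [hC]
        _ ≤ Real.log r := neg_abs_le _
        _ ≤ _ := hl1
    · calc Real.log (m x / mstar x) ≤ Real.log R := hl2
        _ ≤ |Real.log R| := le_abs_self _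
        _ ≤ C := le_max_right _ _
  have hlog_int : Integrable (fun x => Real.log (m x / mstar x) * m x) := by
    apply Integrable.mono' (hm_int.const_mul C) hmeas_log
    filter_upwards with x
    rw [Real.norm_eq_abs, abs_mul, abs_of_nonneg (hm0 x)]
    exact mul_le_mul_of_nonneg_right (hlog_bound x) (hm0 x)
  have hk_int : Integrable k := (hlog_int.sub hm_int).add hmstar_int
  -- integrability of chi-square integrand
  have hchi_int : Integrable (fun x => (mstar x / m x - 1) ^ 2 * m x) := by
    apply Integrable.mono' (hm_int.const_mul ((1/r + 1)^2))
      ((((hmstar.div hm).sub measurable_const).pow measurable_const).mul hm).aestronglyMeasurable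
    filter_upwards with x
    show ‖(mstar x / m x - 1) ^ 2 * m x‖ ≤ _
    rw [Real.norm_eq_abs, abs_mul, abs_of_nonneg (hm0 x), abs_of_nonneg (sq_nonneg _)]
    apply mul_le_mul_of_nonneg_right _ (hm0 x)
    have h1 := (hratio x).1
    have hinv : mstar x / m x ≤ 1/r := by
      rw [div_le_div_iff₀ (hapos x) hr]
      have := (hratio x).1
      rw [le_div_iff₀ (hbpos x)] at this
      linarith
    have hinv0 : 0 < mstar x / m x := div_pos (hbpos x) (hapos x)
    have : |mstar x / m x - 1| ≤ 1/r + 1 := by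
      rw [abs_le]
      constructor <;> nlinarith
    calc (mstar x / m x - 1)^2 = |mstar x / m x - 1|^2 := (sq_abs _).symm
      _ ≤ (1/r + 1)^2 := by
          apply pow_le_pow_left₀ (abs_nonneg _) this
  -- pointwise inequality
  have hpt : ∀ x, (mstar x / m x - 1) ^ 2 * m x ≤ (2*R/r) * k x := by
    intro x
    have hb : mstar x ≠ 0 := (hbpos x).ne'
    have hcore := stmt15_core hr hrR hR1 (hratio x).1 (hratio x).2
    have hmul := mul_le_mul_of_nonneg_right hcore (hbpos x).le
    have eL : ((m x / mstar x)⁻¹ - 1)^2 * (m x / mstar x) * mstar x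
        = (mstar x / m x - 1) ^ 2 * m x := by
      rw [inv_div, mul_assoc, div_mul_cancel₀ _ hb]
    have eR : 2*R/r * (m x / mstar x * Real.log (m x / mstar x) - m x / mstar x + 1) * mstar x
        = 2*R/r * k x := by
      rw [hk]
      simp only
      rw [mul_assoc]
      congr 1
      field_simp
    rw [← eL, ← eR]
    exact hmul
  -- integrate
  have hmono := integral_mono hchi_int (hk_int.const_mul (2*R/r)) hpt
  rw [integral_const_mul] at hmono
  have : ∫ x, k x = ∫ x, Real.log (m x / mstar x) * m x := by
    have h1 : ∫ x, k x
        = (∫ x, (Real.log (m x / mstar x) * m x - m x)) + ∫ x, mstar x := by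
      rw [hk]
      exact integral_add (hlog_int.sub hm_int) hmstar_int
    have h2 : ∫ x, (Real.log (m x / mstar x) * m x - m x)
        = (∫ x, Real.log (m x / mstar x) * m x) - ∫ x, m x :=
      integral_sub hlog_int hm_int
    rw [h1, h2, hm1, hmstar1]
    ring
  rw [this] at hmono
  exact hmono
end
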